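/- Let k ≥ 3 be an integer, J a positive integer, and κ > 0 a real number. Define α_j := (k/(k−2))^{j−1} − 1 for j = 1, …, J, and γ_1 := 1, γ_j := ( κ·α_j·(α_j + 1)/(8k²) )^{1/(k−2)} · γ_{j−1}^{k/(k−2)} for j = 2, …, J. For t < 0 set λ_j(t) := γ_j·(−t)^{−α_j} and b_j(t) := −α_j·γ_j·(−t)^{−(α_j + 1)}. Then for every t < 0: (i) λ_j'(t) = −b_j(t) for every j ∈ {1, …, J}; (ii) b_1'(t) = 0; and (iii) for every j ∈ {2, …, J}, b_j'(t) = −(8k²/κ)·λ_j(t)^{k−1}/λ_{j−1}(t)^k. In other words, (λ_j, b_j)_{j=1}^J is an exact solution of the formal modulation ODE system λ_{j,t} = −b_j, b_{j,t} = −8k²·κ^{−1}·λ_j^{k−1}/λ_{j−1}^k·1_{j ≥ 2}. -/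

import Mathlib

/-- Derivative of `t ↦ (-t)^p` at a negative point. -/
lemma negpow_hasDerivAt (p t : ℝ) (ht : t < 0) :
    HasDerivAt (fun t : ℝ => (-t) ^ p) (-(p * (-t) ^ (p - 1))) t := by
  have hsne : (-t) ≠ 0 := ne_of_gt (neg_pos.mpr ht)
  have h1 : HasDerivAt (fun x : ℝ => x ^ p) (p * (-t) ^ (p - 1)) (-t) :=
    Real.hasDerivAt_rpow_const (Or.inl hsne)
  have h2 := h1.comp t (hasDerivAt_neg t)
  convert h2 using 1
  any_goals rfl
  ring

/-- The scales `λ_j(t) = γ_j |t|^{-α_j}` and `b_j(t) = -α_j γ_j |t|^{-(α_j+1)}`, with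
`α_j = (k/(k-2))^{j-1} - 1` and `γ_1 = 1`,
`γ_j = (κ α_j (α_j+1)/(8k²))^{1/(k-2)} γ_{j-1}^{k/(k-2)}`, form an exact solution of the
formal modulation ODE system `λ_{j,t} = -b_j`, `b_{j,t} = -8k² κ⁻¹ λ_j^{k-1}/λ_{j-1}^k 1_{j≥2}`
for `t < 0`. -/
theorem stmt_14 (k J : ℕ) (hk : 3 ≤ k) (hJ : 1 ≤ J) (κ : ℝ) (hκ : 0 < κ)
    (α γ : ℕ → ℝ)
    (hα : ∀ j, 1 ≤ j → j ≤ J → α j = ((k : ℝ) / ((k : ℝ) - 2)) ^ (j - 1) - 1)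
    (hγ1 : γ 1 = 1)
    (hγ : ∀ j, 2 ≤ j → j ≤ J →
      γ j = (κ * α j * (α j + 1) / (8 * (k : ℝ) ^ 2)) ^ ((1 : ℝ) / ((k : ℝ) - 2)) *
              γ (j - 1) ^ ((k : ℝ) / ((k : ℝ) - 2)))
    (lam b : ℕ → ℝ → ℝ)
    (hlam : ∀ j t, lam j t = γ j * (-t) ^ (-(α j)))
    (hb : ∀ j t, b j t = -(α j) * γ j * (-t) ^ (-(α j + 1))) :
    ∀ t < (0 : ℝ), ∀ j, 1 ≤ j → j ≤ J →
      HasDerivAt (lam j) (-(b j t)) t ∧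
      (j = 1 → HasDerivAt (b 1) 0 t) ∧
      (2 ≤ j → HasDerivAt (b j)
        (-(8 * (k : ℝ) ^ 2 / κ) * (lam j t) ^ (k - 1) / (lam (j - 1) t) ^ k) t) := by
  -- basic facts about k
  have hk2 : (2 : ℝ) < (k : ℝ) := by exact_mod_cast (by omega : 2 < k)
  have hk2pos : (0 : ℝ) < (k : ℝ) - 2 := by linarith
  have hk2ne : (k : ℝ) - 2 ≠ 0 := ne_of_gt hk2pos
  have hr1 : 1 < (k : ℝ) / ((k : ℝ) - 2) := (one_lt_div hk2pos).mpr (by linarith)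
  -- positivity of α j for j ≥ 2
  have hαpos : ∀ m, 2 ≤ m → m ≤ J → 0 < α m := by
    intro m hm2 hmJ
    rw [hα m (by omega) hmJ]
    have : 1 < ((k : ℝ) / ((k : ℝ) - 2)) ^ (m - 1) :=
      one_lt_pow₀ hr1 (by omega)
    linarith
  -- positivity of γ m for 1 ≤ m ≤ J
  have hγpos : ∀ m, 1 ≤ m → m ≤ J → 0 < γ m := by
    intro m
    induction m with
    | zero => omega
    | succ n ih =>
      intro h1 h2
      rcases Nat.eq_zero_or_pos n with hn | hn
      · subst hn; rw [hγ1]; norm_num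
      · have hαn : 0 < α (n + 1) := hαpos (n + 1) (by omega) h2
        have hC : 0 < κ * α (n + 1) * (α (n + 1) + 1) / (8 * (k : ℝ) ^ 2) := by
          apply div_pos
          · exact mul_pos (mul_pos hκ hαn) (by linarith)
          · positivity
        have hγn : 0 < γ n := ih (by omega) (by omega)
        rw [hγ (n + 1) (by omega) h2]
        simp only [Nat.add_sub_cancel]
        exact mul_pos (Real.rpow_pos_of_pos hC _) (Real.rpow_pos_of_pos hγn _)
  intro t ht j hj1 hjJ
  have hs : (0 : ℝ) < -t := by linarith
  refine ⟨?_, ?_, ?_⟩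
  · -- λ_j' = -b_j
    have hlamf : lam j = fun t => γ j * (-t) ^ (-(α j)) := funext (hlam j)
    rw [hlamf]
    have h := (negpow_hasDerivAt (-(α j)) t ht).const_mul (γ j)
    convert h using 1
    any_goals rfl
    rw [hb]
    rw [show -(α j + 1) = -(α j) - 1 by ring]
    ring
  · -- b_1' = 0
    intro _
    have hb1 : b 1 = fun _ => (0 : ℝ) := by
      funext t'
      rw [hb, hα 1 le_rfl hJ]
      simp
    rw [hb1]
    exact hasDerivAt_const t 0
  · -- b_j' for j ≥ 2
    intro hj2
    have hbf : b j = fun t => -(α j) * γ j * (-t) ^ (-(α j + 1)) := funext (hb j)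
    rw [hbf]
    have h := (negpow_hasDerivAt (-(α j + 1)) t ht).const_mul (-(α j) * γ j)
    convert h using 1
    any_goals rfl
    -- now prove the algebraic identity
    have hγj := hγpos j (by omega) hjJ
    have hγjm := hγpos (j - 1) (by omega) (by omega)
    have hαj := hαpos j hj2 hjJ
    -- exponent relation: (k-2)(α j + 1) = k (α (j-1) + 1)
    have hα1 : α j + 1 = ((k : ℝ) / ((k : ℝ) - 2)) ^ (j - 1) := by
      rw [hα j (by omega) hjJ]; ring
    have hα2 : α (j - 1) + 1 = ((k : ℝ) / ((k : ℝ) - 2)) ^ (j - 2) := by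
      rw [hα (j - 1) (by omega) (by omega), show j - 1 - 1 = j - 2 by omega]; ring
    have hexp : ((k : ℝ) - 2) * (α j + 1) = (k : ℝ) * (α (j - 1) + 1) := by
      rw [hα1, hα2, show j - 1 = (j - 2) + 1 by omega, pow_succ]
      field_simp
    -- recursion as a natural-power identity
    have hCpos : 0 < κ * α j * (α j + 1) / (8 * (k : ℝ) ^ 2) := by
      apply div_pos
      · exact mul_pos (mul_pos hκ hαj) (by linarith)
      · positivity
    have e1 : γ j ^ ((k : ℝ) - 2) =
        (κ * α j * (α j + 1) / (8 * (k : ℝ) ^ 2)) * γ (j - 1) ^ (k : ℝ) := by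
      rw [hγ j hj2 hjJ,
        Real.mul_rpow (Real.rpow_nonneg hCpos.le _) (Real.rpow_nonneg hγjm.le _),
        ← Real.rpow_mul hCpos.le, ← Real.rpow_mul hγjm.le,
        one_div, inv_mul_cancel₀ hk2ne, Real.rpow_one, div_mul_cancel₀ _ hk2ne]
    have ck2 : ((k - 2 : ℕ) : ℝ) = (k : ℝ) - 2 := by
      rw [Nat.cast_sub (by omega)]; norm_num
    have ck1 : ((k - 1 : ℕ) : ℝ) = (k : ℝ) - 1 := by
      rw [Nat.cast_sub (by omega)]; norm_num
    have e2 : γ j ^ (k - 2 : ℕ) =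
        (κ * α j * (α j + 1) / (8 * (k : ℝ) ^ 2)) * γ (j - 1) ^ (k : ℕ) := by
      rw [← Real.rpow_natCast (γ j) (k - 2), ← Real.rpow_natCast (γ (j - 1)) k, ck2]
      exact e1
    -- expand lam and powers of rpow
    rw [hlam j t, hlam (j - 1) t, mul_pow, mul_pow,
      ← Real.rpow_natCast ((-t) ^ (-(α j))) (k - 1),
      ← Real.rpow_natCast ((-t) ^ (-(α (j - 1)))) k,
      ← Real.rpow_mul hs.le, ← Real.rpow_mul hs.le, ck1]
    have hden : γ (j - 1) ^ (k : ℕ) * (-t) ^ (-(α (j - 1)) * (k : ℝ)) ≠ 0 := by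
      have := Real.rpow_pos_of_pos hs (-(α (j - 1)) * (k : ℝ))
      positivity
    rw [div_eq_iff hden]
    -- split γ_j^{k-1} = γ_j^{k-2} * γ_j and use e2
    rw [show k - 1 = (k - 2) + 1 by omega, pow_succ (γ j) (k - 2), e2]
    -- merge rpow factors on the right
    rw [show (-(α j) * γ j * (-(-(α j + 1) * (-t) ^ (-(α j + 1) - 1))) *
        (γ (j - 1) ^ (k : ℕ) * (-t) ^ (-(α (j - 1)) * (k : ℝ)))) =
        -(α j * γ j * (α j + 1) * γ (j - 1) ^ (k : ℕ)) *
          ((-t) ^ (-(α j + 1) - 1) * (-t) ^ (-(α (j - 1)) * (k : ℝ))) by ring,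
      ← Real.rpow_add hs]
    rw [show -(α j + 1) - 1 + -(α (j - 1)) * (k : ℝ) = -(α j) * ((k : ℝ) - 1) by
      linear_combination hexp]
    field_simp
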